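/- Let a ∈ F_{2^n}^*, let i be a positive integer with gcd(i, 2^n − 1) = 1, and let t be the multiplicative inverse of 2i modulo 2^n − 1. Then for u ∈ U, one has a u^i + a^{2^m} u^{−i} = 0 if and only if u = a^{t(2^m − 1)}. -/
import Mathlib


open scoped Classical

/-- Let `a ∈ F_{2^{2m}}^*`, `i` a positive integer coprime with
`2^{2m} − 1`, and `t` the multiplicative inverse of `2i` modulo `2^{2m} − 1`.  Then for
`u ∈ U = {x : x^{2^m+1} = 1}`, one has `a uⁱ + a^{2^m} u^{−i} = 0` iff `u = a^{t(2^m−1)}`. -/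
theorem vanishing_criterion (m : ℕ) (hm : 0 < m)
    (K : Type) [Field K] [Fintype K]
    (hcard : Fintype.card K = 2 ^ (2 * m))
    (a : K) (ha : a ≠ 0)
    (i : ℕ) (hi : 0 < i) (hgcd : Nat.gcd i (2 ^ (2 * m) - 1) = 1)
    (t : ℕ) (ht : (2 * i * t) % (2 ^ (2 * m) - 1) = 1)
    (u : K) (hu : u ^ (2 ^ m + 1) = 1) :
    a * u ^ i + a ^ 2 ^ m * (u⁻¹) ^ i = 0 ↔ u = a ^ (t * (2 ^ m - 1)) := by
  have hm1 : 1 ≤ 2 ^ m := Nat.one_le_two_pow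
  have hq : 2 ≤ 2 ^ (2 * m) := by
    calc 2 = 2 ^ 1 := rfl
    _ ≤ 2 ^ (2 * m) := Nat.pow_le_pow_right (by norm_num) (by omega)
  have h2 : (2 : K) = 0 := by
    have h := FiniteField.cast_card_eq_zero K
    rw [hcard] at h
    push_cast at h
    exact pow_eq_zero_iff (by omega) |>.mp h
  have hneg : ∀ x : K, -x = x := fun x => by
    have hx : x + x = 0 := by rw [← two_mul, h2, zero_mul]
    exact neg_eq_of_add_eq_zero_left hx
  have hu0 : u ≠ 0 := by
    intro h
    rw [h, zero_pow (by omega)] at hu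
    exact zero_ne_one hu
  have hK : ∀ x : K, x ≠ 0 → x ^ (2 ^ (2 * m) - 1) = 1 := fun x hx => by
    have h := FiniteField.pow_card_sub_one_eq_one x hx
    rwa [hcard] at h
  obtain ⟨k, hk⟩ : ∃ k, 2 * i * t = k * (2 ^ (2 * m) - 1) + 1 := by
    refine ⟨2 * i * t / (2 ^ (2 * m) - 1), ?_⟩
    have h := Nat.div_add_mod (2 * i * t) (2 ^ (2 * m) - 1)
    rw [ht, Nat.mul_comm] at h
    omega
  have hsub : a ^ (2 ^ m - 1) = a ^ 2 ^ m / a := by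
    rw [pow_sub₀ a ha hm1, pow_one]
    rw [div_eq_mul_inv]
  have key : a * u ^ i + a ^ 2 ^ m * (u⁻¹) ^ i = 0 ↔ u ^ (2 * i) = a ^ 2 ^ m / a := by
    rw [inv_pow]
    have hui : u ^ i ≠ 0 := pow_ne_zero _ hu0
    constructor
    · intro h
      have h' : a * u ^ i = a ^ 2 ^ m * (u ^ i)⁻¹ := by
        rw [add_eq_zero_iff_eq_neg] at h
        rw [h, hneg]
      field_simp at h' ⊢
      rw [two_mul, pow_add]
      linear_combination h'
    · intro h
      have h' : a * u ^ i = a ^ 2 ^ m * (u ^ i)⁻¹ := by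
        field_simp
        rw [two_mul, pow_add] at h
        field_simp at h
        linear_combination h
      rw [h', ← two_mul, h2, zero_mul]
  rw [key]
  constructor
  · intro h
    have hu1 : u ^ (2 ^ (2 * m) - 1) = 1 := hK u hu0
    calc u = u ^ (2 * i * t) := by
          rw [hk, pow_add, pow_one, pow_mul, hK _ (pow_ne_zero _ hu0), one_mul]
      _ = (u ^ (2 * i)) ^ t := by rw [← pow_mul]
      _ = (a ^ 2 ^ m / a) ^ t := by rw [h]
      _ = a ^ (t * (2 ^ m - 1)) := by rw [← hsub, ← pow_mul, mul_comm]
  · intro h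
    rw [h, ← pow_mul]
    have he : t * (2 ^ m - 1) * (2 * i) = (2 ^ m - 1) + (2 ^ m - 1) * k * (2 ^ (2 * m) - 1) := by
      have : t * (2 ^ m - 1) * (2 * i) = (2 ^ m - 1) * (2 * i * t) := by ring
      rw [this, hk]
      ring
    rw [he, pow_add, pow_mul, hK _ (pow_ne_zero _ ha), mul_one, hsub]
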